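/- Let G be a group, A a left G-module (an abelian group with G-action by additive automorphisms), and suppose for each nonidentity conjugacy class α of G a representative σ_α ∈ α is chosen. Then Wh₁⁺(G;A), the coinvariants of the diagonal G-action on A[G]/A[e], is isomorphic as an abelian group to the direct sum over the nonidentity conjugacy classes α of the coinvariants A_{C(σ_α)} of the action of the centralizer C(σ_α) on A. -/

import Mathlib

open scoped DirectSum

/-- The diagonal action of `σ : G` on `A[G] = G →₀ A`, sending `f` to
`τ ↦ σ • f (σ⁻¹ * τ * σ)`. -/
noncomputable def diagHom (G : Type*) [Group G] (A : Type*) [AddCommGroup A]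
    [DistribMulAction G A] (σ : G) : (G →₀ A) →+ (G →₀ A) :=
  (Finsupp.mapDomain.addMonoidHom fun x => σ * x * σ⁻¹).comp
    (Finsupp.mapRange.addMonoidHom (DistribMulAction.toAddMonoidHom A σ))

/-- The subgroup `A[e]` of `A[G] = G →₀ A` consisting of functions supported at the
identity element of `G`. -/
def suppAtOne (G : Type*) [Group G] (A : Type*) [AddCommGroup A] :
    AddSubgroup (G →₀ A) where
  carrier := {f | (f.support : Set G) ⊆ ({1} : Set G)}
  zero_mem' := by simp
  add_mem' := by
    classical
    intro f g hf hg τ hτ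
    have h : τ ∈ f.support ∪ g.support := Finsupp.support_add (Finset.mem_coe.mp hτ)
    rcases Finset.mem_union.mp h with h' | h'
    · exact hf h'
    · exact hg h'
  neg_mem' := by
    intro f hf
    simpa using hf

/-- The diagonal `G`-action descends to the quotient `A[G]/A[e]`. -/
noncomputable def qAct (G : Type*) [Group G] (A : Type*) [AddCommGroup A]
    [DistribMulAction G A] (σ : G) :
    ((G →₀ A) ⧸ suppAtOne G A) →+ ((G →₀ A) ⧸ suppAtOne G A) :=
  QuotientAddGroup.map _ _ (diagHom G A σ) (by
    classical
    intro f hf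
    simp only [AddSubgroup.mem_comap]
    intro τ hτ
    have h1 : τ ∈ (Finsupp.mapDomain (fun x => σ * x * σ⁻¹)
        (Finsupp.mapRange (fun a => σ • a) (smul_zero σ) f)).support :=
      Finset.mem_coe.mp hτ
    have h2 := Finsupp.mapDomain_support h1
    rcases Finset.mem_image.mp h2 with ⟨x, hx, rfl⟩
    have hx' : x ∈ f.support := Finsupp.support_mapRange hx
    have : x ∈ ({1} : Set G) := hf hx'
    simp only [Set.mem_singleton_iff] at this
    subst this
    simp)

/-- The subgroup of `A[G]/A[e]` generated by all `σ · x − x`, so that the quotient by it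
is the group of coinvariants `Wh₁⁺(G;A)`. -/
noncomputable def whRel (G : Type*) [Group G] (A : Type*) [AddCommGroup A]
    [DistribMulAction G A] : AddSubgroup ((G →₀ A) ⧸ suppAtOne G A) :=
  AddSubgroup.closure
    {x | ∃ (σ : G) (q : (G →₀ A) ⧸ suppAtOne G A), x = qAct G A σ q - q}

/-- `Wh₁⁺(G;A)`: the coinvariants of the diagonal `G`-action on `A[G]/A[e]`. -/
noncomputable abbrev Wh1Plus (G : Type*) [Group G] (A : Type*) [AddCommGroup A]
    [DistribMulAction G A] :=
  ((G →₀ A) ⧸ suppAtOne G A) ⧸ whRel G A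

/-- The subgroup of `A` generated by the elements `τ • a − a` with `τ` in the centralizer
`C(σ)`; the quotient by it is the group of coinvariants `A_{C(σ)}`. -/
noncomputable def centRel (G : Type*) [Group G] (A : Type*) [AddCommGroup A]
    [DistribMulAction G A] (σ : G) : AddSubgroup A :=
  AddSubgroup.closure
    {x | ∃ τ ∈ Subgroup.centralizer ({σ} : Set G), ∃ a : A, x = τ • a - a}

section Aux

open Finsupp

open scoped Classical

variable {G : Type*} [Group G] {A : Type*} [AddCommGroup A] [DistribMulAction G A]

private lemma diagHom_single (σ τ : G) (a : A) :
    diagHom G A σ (Finsupp.single τ a) = Finsupp.single (σ * τ * σ⁻¹) (σ • a) := by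
  simp [diagHom, Finsupp.mapDomain_single]

private lemma mk_ne_mk_one {τ : G} (hτ : τ ≠ 1) :
    ConjClasses.mk τ ≠ ConjClasses.mk (1 : G) := fun h =>
  hτ (isConj_one_right.mp (ConjClasses.mk_eq_mk_iff_isConj.mp h.symm))

private def idxNC (τ : G) (hτ : τ ≠ 1) : {c : ConjClasses G // c ≠ ConjClasses.mk (1 : G)} :=
  ⟨ConjClasses.mk τ, mk_ne_mk_one hτ⟩

variable (rep : {c : ConjClasses G // c ≠ ConjClasses.mk (1 : G)} → G)
  (hrep : ∀ c, ConjClasses.mk (rep c) = (c : ConjClasses G))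

private noncomputable def gel (τ : G) : G :=
  if h : τ = 1 then 1 else
    Classical.choose (isConj_iff.mp (ConjClasses.mk_eq_mk_iff_isConj.mp (hrep (idxNC τ h))))

private lemma gel_spec (τ : G) (h : τ ≠ 1) :
    gel rep hrep τ * rep (idxNC τ h) * (gel rep hrep τ)⁻¹ = τ := by
  rw [gel, dif_neg h]
  exact Classical.choose_spec (isConj_iff.mp (ConjClasses.mk_eq_mk_iff_isConj.mp (hrep (idxNC τ h))))

private lemma centQuot_smul_eq {σ h : G} (hh : h ∈ Subgroup.centralizer ({σ} : Set G)) (b : A) :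
    (QuotientAddGroup.mk (h • b) : A ⧸ centRel G A σ) = QuotientAddGroup.mk b := by
  rw [QuotientAddGroup.eq]
  have : -(h • b) + b = -(h • b - b) := by abel
  rw [this]
  exact neg_mem (AddSubgroup.subset_closure ⟨h, hh, b, rfl⟩)

private noncomputable def phi :
    (G →₀ A) →+ ⨁ c : {c : ConjClasses G // c ≠ ConjClasses.mk (1 : G)}, A ⧸ centRel G A (rep c) :=
  Finsupp.liftAddHom fun τ =>
    if h : τ = 1 then 0 else
      ((DirectSum.of (fun c => A ⧸ centRel G A (rep c)) (idxNC τ h)).comp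
        (QuotientAddGroup.mk' (centRel G A (rep (idxNC τ h))))).comp
        (DistribMulAction.toAddMonoidHom A (gel rep hrep τ)⁻¹)

private lemma phi_single_one (a : A) : phi rep hrep (Finsupp.single (1 : G) a) = 0 := by
  rw [phi, Finsupp.liftAddHom_apply_single, dif_pos rfl]
  rfl

private lemma phi_single (τ : G) (a : A) (i : {c : ConjClasses G // c ≠ ConjClasses.mk (1 : G)})
    (hi : ConjClasses.mk τ = (i : ConjClasses G)) (g : G) (hg : g * rep i * g⁻¹ = τ) :
    phi rep hrep (Finsupp.single τ a)
      = DirectSum.of (fun c => A ⧸ centRel G A (rep c)) i (QuotientAddGroup.mk (g⁻¹ • a)) := by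
  have hτ : τ ≠ 1 := by rintro rfl; exact i.2 hi.symm
  rw [phi, Finsupp.liftAddHom_apply_single]
  rw [dif_neg hτ]
  obtain ⟨i, hi'⟩ := i
  simp only at hi
  subst hi
  show DirectSum.of _ (⟨ConjClasses.mk τ, hi'⟩ : {c : ConjClasses G // c ≠ ConjClasses.mk 1}) _ = _
  refine congrArg _ ?_
  set γ := gel rep hrep τ with hγdef
  have hγ : γ * rep ⟨ConjClasses.mk τ, hi'⟩ * γ⁻¹ = τ := gel_spec rep hrep τ hτ
  set σ := rep (⟨ConjClasses.mk τ, hi'⟩ : {c : ConjClasses G // c ≠ ConjClasses.mk 1}) with hσdef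
  have hcent : g⁻¹ * γ ∈ Subgroup.centralizer ({σ} : Set G) := by
    rw [Subgroup.mem_centralizer_singleton_iff]
    have h3 : g⁻¹ * (g * σ * g⁻¹) * γ = g⁻¹ * (γ * σ * γ⁻¹) * γ := by rw [hg, hγ]
    simpa [mul_assoc] using h3.symm
  have hsm : g⁻¹ • a = (g⁻¹ * γ) • (γ⁻¹ • a) := by
    rw [← mul_smul, mul_assoc, mul_inv_cancel, mul_one]
  rw [hsm]
  exact (centQuot_smul_eq hcent _).symm

private lemma phi_comp_diag (σ : G) :
    (phi (A := A) rep hrep).comp (diagHom G A σ) = phi rep hrep := by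
  apply Finsupp.addHom_ext
  intro τ a
  rw [AddMonoidHom.comp_apply, diagHom_single]
  by_cases h : τ = 1
  · subst h
    simp [phi_single_one]
  · have hconj : ConjClasses.mk (σ * τ * σ⁻¹) = ((idxNC τ h : {c : ConjClasses G // c ≠ ConjClasses.mk 1}) : ConjClasses G) :=
      ConjClasses.mk_eq_mk_iff_isConj.mpr (isConj_iff.mpr ⟨σ⁻¹, by group⟩)
    have hg2 : (σ * gel rep hrep τ) * rep (idxNC τ h) * (σ * gel rep hrep τ)⁻¹ = σ * τ * σ⁻¹ := by
      rw [mul_inv_rev,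
        show σ * gel rep hrep τ * rep (idxNC τ h) * ((gel rep hrep τ)⁻¹ * σ⁻¹)
          = σ * (gel rep hrep τ * rep (idxNC τ h) * (gel rep hrep τ)⁻¹) * σ⁻¹ by group,
        gel_spec rep hrep τ h]
    rw [phi_single rep hrep (σ * τ * σ⁻¹) (σ • a) (idxNC τ h) hconj _ hg2,
      phi_single rep hrep τ a (idxNC τ h) rfl _ (gel_spec rep hrep τ h)]
    congr 1
    rw [mul_inv_rev, mul_smul, inv_smul_smul]

private lemma phi_suppAtOne (f : G →₀ A) (hf : f ∈ suppAtOne G A) : phi rep hrep f = 0 := by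
  have hsub : f.support ⊆ ({1} : Finset G) := by
    intro x hx
    have := hf (Finset.mem_coe.mpr hx)
    simpa using this
  rw [Finsupp.support_subset_singleton.mp hsub, phi_single_one]

private noncomputable def PhiW :
    Wh1Plus G A →+ ⨁ c : {c : ConjClasses G // c ≠ ConjClasses.mk (1 : G)}, A ⧸ centRel G A (rep c) := by
  refine QuotientAddGroup.lift _ (QuotientAddGroup.lift _ (phi rep hrep) ?_) ?_
  · exact fun f hf => AddMonoidHom.mem_ker.mpr (phi_suppAtOne rep hrep f hf)
  · rw [whRel]
    refine (AddSubgroup.closure_le _).mpr ?_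
    rintro x ⟨σ, q, rfl⟩
    simp only [SetLike.mem_coe, AddMonoidHom.mem_ker, map_sub, sub_eq_zero]
    induction q using QuotientAddGroup.induction_on with
    | H f =>
      rw [show qAct G A σ (QuotientAddGroup.mk f) = QuotientAddGroup.mk (diagHom G A σ f) from
        QuotientAddGroup.map_mk _ _ _ _ f]
      rw [QuotientAddGroup.lift_mk, QuotientAddGroup.lift_mk]
      exact DFunLike.congr_fun (phi_comp_diag rep hrep σ) f

private lemma mkW_qAct (σ : G) (q : (G →₀ A) ⧸ suppAtOne G A) :
    (QuotientAddGroup.mk (qAct G A σ q) : Wh1Plus G A) = QuotientAddGroup.mk q := by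
  rw [QuotientAddGroup.eq]
  have : -(qAct G A σ q) + q = -(qAct G A σ q - q) := by abel
  rw [this]
  exact neg_mem (AddSubgroup.subset_closure ⟨σ, q, rfl⟩)

private noncomputable def psibar (c : {c : ConjClasses G // c ≠ ConjClasses.mk (1 : G)}) :
    A ⧸ centRel G A (rep c) →+ Wh1Plus G A := by
  refine QuotientAddGroup.lift _
    (((QuotientAddGroup.mk' (whRel G A)).comp (QuotientAddGroup.mk' (suppAtOne G A))).comp
      (Finsupp.singleAddHom (rep c))) ?_
  rw [centRel]
  refine (AddSubgroup.closure_le _).mpr ?_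
  rintro x ⟨τ, hτ, a, rfl⟩
  simp only [SetLike.mem_coe, AddMonoidHom.mem_ker, map_sub, sub_eq_zero,
    AddMonoidHom.comp_apply, Finsupp.singleAddHom_apply]
  have hcomm : τ * rep c * τ⁻¹ = rep c := by
    have := (Subgroup.mem_centralizer_singleton_iff).mp hτ
    rw [this, mul_assoc, mul_inv_cancel, mul_one]
  have h1 : Finsupp.single (rep c) (τ • a) = diagHom G A τ (Finsupp.single (rep c) a) := by
    rw [diagHom_single, hcomm]
  rw [h1]
  show (QuotientAddGroup.mk (QuotientAddGroup.mk (diagHom G A τ (Finsupp.single (rep c) a))) : Wh1Plus G A) = _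
  rw [show (QuotientAddGroup.mk (diagHom G A τ (Finsupp.single (rep c) a)) :
        (G →₀ A) ⧸ suppAtOne G A)
      = qAct G A τ (QuotientAddGroup.mk (Finsupp.single (rep c) a)) from
    (QuotientAddGroup.map_mk _ _ _ _ _).symm]
  exact mkW_qAct τ _

private noncomputable def PsiW :
    (⨁ c : {c : ConjClasses G // c ≠ ConjClasses.mk (1 : G)}, A ⧸ centRel G A (rep c)) →+
      Wh1Plus G A :=
  DirectSum.toAddMonoid (γ := Wh1Plus G A) (psibar rep)

private lemma left_inv_aux (x : Wh1Plus G A) : PsiW rep (PhiW rep hrep x) = x := by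
  induction x using QuotientAddGroup.induction_on with
  | H q =>
  induction q using QuotientAddGroup.induction_on with
  | H f =>
  have hPhi : ∀ f : G →₀ A,
      PhiW rep hrep (QuotientAddGroup.mk (QuotientAddGroup.mk f)) = phi rep hrep f := by
    intro f
    rw [PhiW, QuotientAddGroup.lift_mk, QuotientAddGroup.lift_mk]
  induction f using Finsupp.induction_linear with
  | zero => simp [hPhi]
  | add f g hf hg =>
    have : (QuotientAddGroup.mk (QuotientAddGroup.mk (f + g)) : Wh1Plus G A)
        = QuotientAddGroup.mk (QuotientAddGroup.mk f) + QuotientAddGroup.mk (QuotientAddGroup.mk g) := by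
      simp
    rw [this, map_add, map_add, hf, hg]
  | single τ a =>
    by_cases h : τ = 1
    · subst h
      have hmem : Finsupp.single (1 : G) a ∈ suppAtOne G A := by
        intro x hx
        have := Finsupp.support_single_subset (Finset.mem_coe.mp hx)
        simpa using this
      have h1 : (QuotientAddGroup.mk (Finsupp.single (1 : G) a) :
          (G →₀ A) ⧸ suppAtOne G A) = 0 := (QuotientAddGroup.eq_zero_iff _).mpr hmem
      rw [hPhi, phi_single_one, map_zero,
        show ((QuotientAddGroup.mk (QuotientAddGroup.mk (Finsupp.single (1 : G) a)) :
          Wh1Plus G A)) = QuotientAddGroup.mk (0 : (G →₀ A) ⧸ suppAtOne G A) from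
          congrArg _ h1, QuotientAddGroup.mk_zero]
    · rw [hPhi, phi_single rep hrep τ a (idxNC τ h) rfl _ (gel_spec rep hrep τ h)]
      rw [PsiW, DirectSum.toAddMonoid_of, psibar, QuotientAddGroup.lift_mk]
      simp only [AddMonoidHom.comp_apply, Finsupp.singleAddHom_apply, QuotientAddGroup.mk'_apply]
      set γ := gel rep hrep τ
      have h1 : diagHom G A γ (Finsupp.single (rep (idxNC τ h)) (γ⁻¹ • a)) = Finsupp.single τ a := by
        rw [diagHom_single, gel_spec rep hrep τ h, smul_inv_smul]
      calc (QuotientAddGroup.mk (QuotientAddGroup.mk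
              (Finsupp.single (rep (idxNC τ h)) (γ⁻¹ • a))) : Wh1Plus G A)
          = QuotientAddGroup.mk (qAct G A γ
              (QuotientAddGroup.mk (Finsupp.single (rep (idxNC τ h)) (γ⁻¹ • a)))) :=
            (mkW_qAct γ _).symm
        _ = QuotientAddGroup.mk (QuotientAddGroup.mk (Finsupp.single τ a)) := by
            rw [show qAct G A γ (QuotientAddGroup.mk
                  (Finsupp.single (rep (idxNC τ h)) (γ⁻¹ • a)))
                = QuotientAddGroup.mk (diagHom G A γ
                  (Finsupp.single (rep (idxNC τ h)) (γ⁻¹ • a))) from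
                QuotientAddGroup.map_mk _ _ _ _ _, h1]

private lemma right_inv_aux
    (y : ⨁ c : {c : ConjClasses G // c ≠ ConjClasses.mk (1 : G)}, A ⧸ centRel G A (rep c)) :
    PhiW rep hrep (PsiW rep y) = y := by
  induction y using DirectSum.induction_on with
  | zero => simp
  | of c x =>
    induction x using QuotientAddGroup.induction_on with
    | H a =>
    rw [PsiW, DirectSum.toAddMonoid_of, psibar, QuotientAddGroup.lift_mk]
    simp only [AddMonoidHom.comp_apply, Finsupp.singleAddHom_apply, QuotientAddGroup.mk'_apply]
    rw [PhiW, QuotientAddGroup.lift_mk, QuotientAddGroup.lift_mk]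
    rw [phi_single rep hrep (rep c) a c (hrep c) 1 (by group)]
    simp
  | add x y hx hy => rw [map_add, map_add, hx, hy]

end Aux

/-- Given a choice of representative `σ_α` for each nonidentity conjugacy class `α` of `G`,
`Wh₁⁺(G;A)` is isomorphic to the direct sum, over the nonidentity conjugacy classes `α`,
of the coinvariants `A_{C(σ_α)}`. -/
theorem stmt5 {G : Type*} [Group G] {A : Type*} [AddCommGroup A] [DistribMulAction G A]
    (rep : {c : ConjClasses G // c ≠ ConjClasses.mk (1 : G)} → G)
    (hrep : ∀ c, ConjClasses.mk (rep c) = (c : ConjClasses G)) :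
    Nonempty (Wh1Plus G A ≃+
      ⨁ c : {c : ConjClasses G // c ≠ ConjClasses.mk (1 : G)}, A ⧸ centRel G A (rep c)) := by
  exact ⟨{ toFun := PhiW rep hrep, invFun := PsiW rep,
           left_inv := left_inv_aux rep hrep, right_inv := right_inv_aux rep hrep,
           map_add' := (PhiW rep hrep).map_add }⟩
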